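/- Let X be a set and (f_n) a bounded sequence in ℓ^∞(X). Then there exists a normalized block sequence (b_n) of (f_n) such that δ_X(b_n) = ε_X(b_n), where δ_X(h_n) := sup_{x∈X} limsup_n h_n(x) and ε_X(h_n) := inf{ δ_X(k_n) : (k_n) a normalized block sequence of (h_n) }. -/

import Mathlib

open Filter

/-- `b` is a normalized block sequence of `f`. -/
def IsNormalizedBlockSeq {X : Type*} (f b : ℕ → X → ℝ) : Prop :=
  ∃ (F : ℕ → Finset ℕ) (lam : ℕ → ℝ),
    (Pairwise fun m n => Disjoint (F m) (F n)) ∧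
    (∀ n, ∑ i ∈ F n, |lam i| = 1) ∧
    (∀ n, b n = fun x => ∑ i ∈ F n, lam i * f i x)

/-- `δ_X`. -/
noncomputable def deltaX {X : Type*} (h : ℕ → X → ℝ) : ℝ :=
  ⨆ x, limsup (fun n => h n x) atTop

/-- `ε_X`. -/
noncomputable def epsX {X : Type*} (f : ℕ → X → ℝ) : ℝ :=
  sInf {c | ∃ b, IsNormalizedBlockSeq f b ∧ c = deltaX b}

namespace HJaux

variable {X : Type*}

/-- Generalized block data: per-term coefficient functions. -/
def GB (u c : ℕ → X → ℝ) (F : ℕ → Finset ℕ) (lam : ℕ → ℕ → ℝ) : Prop :=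
  (Pairwise fun m n => Disjoint (F m) (F n)) ∧
  (∀ n, ∑ i ∈ F n, |lam n i| = 1) ∧
  (∀ n x, c n x = ∑ i ∈ F n, lam n i * u i x)

theorem GB.toINBS {u c : ℕ → X → ℝ} {F : ℕ → Finset ℕ} {lam : ℕ → ℕ → ℝ}
    (h : GB u c F lam) : IsNormalizedBlockSeq u c := by
  classical
  obtain ⟨hd, hn, he⟩ := h
  have hpaste : ∀ {n i}, i ∈ F n →
      (if hi' : ∃ m, i ∈ F m then lam hi'.choose i else 0) = lam n i := by
    intro n i hi
    have hex : ∃ m, i ∈ F m := ⟨n, hi⟩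
    rw [dif_pos hex]
    have hc : hex.choose = n := by
      by_contra hne
      exact (Finset.disjoint_left.mp (hd hne) hex.choose_spec) hi
    rw [hc]
  refine ⟨F, fun i => if hi' : ∃ m, i ∈ F m then lam hi'.choose i else 0, hd, ?_, ?_⟩
  · intro n
    rw [← hn n]
    exact Finset.sum_congr rfl fun i hi => by dsimp only; rw [hpaste hi]
  · intro n
    funext x
    rw [he n x]
    exact (Finset.sum_congr rfl fun i hi => by dsimp only; rw [hpaste hi]).symm

theorem inbs_gb {u c : ℕ → X → ℝ} (h : IsNormalizedBlockSeq u c) :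
    ∃ F lam, GB u c F lam := by
  obtain ⟨F, lam, hd, hn, he⟩ := h
  exact ⟨F, fun _ i => lam i, hd, hn, fun n x => by rw [he n]⟩

theorem GB.refl (u : ℕ → X → ℝ) : GB u u (fun n => {n}) (fun _ _ => 1) :=
  ⟨fun _ _ h => Finset.disjoint_singleton.mpr h,
   fun n => by simp, fun n x => by simp⟩

theorem INBS.refl (u : ℕ → X → ℝ) : IsNormalizedBlockSeq u u := (GB.refl u).toINBS

theorem GB.transPartial {u v c : ℕ → X → ℝ} {K : Set ℕ}
    {F : ℕ → Finset ℕ} {lam : ℕ → ℕ → ℝ} {G : ℕ → Finset ℕ} {mu : ℕ → ℕ → ℝ}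
    (hFd : ∀ ⦃j j'⦄, j ∈ K → j' ∈ K → j ≠ j' → Disjoint (F j) (F j'))
    (hFnorm : ∀ j ∈ K, ∑ i ∈ F j, |lam j i| = 1)
    (hFeq : ∀ j ∈ K, ∀ x, v j x = ∑ i ∈ F j, lam j i * u i x)
    (hGsub : ∀ n, ↑(G n) ⊆ K)
    (hGd : Pairwise fun m n => Disjoint (G m) (G n))
    (hGnorm : ∀ n, ∑ j ∈ G n, |mu n j| = 1)
    (hGeq : ∀ n x, c n x = ∑ j ∈ G n, mu n j * v j x) :
    GB u c (fun n => (G n).biUnion F)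
      (fun n i => ∑ j ∈ (G n).filter (fun j => i ∈ F j), mu n j * lam j i) := by
  have hpd : ∀ n, (↑(G n) : Set ℕ).PairwiseDisjoint F :=
    fun n j hj j' hj' hne => hFd (hGsub n hj) (hGsub n hj') hne
  have hsingle : ∀ {n j i}, j ∈ G n → i ∈ F j →
      (G n).filter (fun j' => i ∈ F j') = {j} := by
    intro n j i hj hi
    ext j'
    simp only [Finset.mem_filter, Finset.mem_singleton]
    constructor
    · rintro ⟨hj', hij'⟩
      by_contra hne
      exact (Finset.disjoint_left.mp
        (hFd (hGsub n hj') (hGsub n hj) hne) hij') hi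
    · rintro rfl; exact ⟨hj, hi⟩
  have hcoef : ∀ {n j i}, j ∈ G n → i ∈ F j →
      (∑ j' ∈ (G n).filter (fun j' => i ∈ F j'), mu n j' * lam j' i) = mu n j * lam j i := by
    intro n j i hj hi
    rw [hsingle hj hi, Finset.sum_singleton]
  refine ⟨?_, ?_, ?_⟩
  · intro m n hmn
    rw [Finset.disjoint_left]
    intro i him hin
    obtain ⟨j, hj, hij⟩ := Finset.mem_biUnion.mp him
    obtain ⟨j', hj', hij'⟩ := Finset.mem_biUnion.mp hin
    have hjj : j = j' := by
      by_contra hne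
      exact (Finset.disjoint_left.mp
        (hFd (hGsub m hj) (hGsub n hj') hne) hij) hij'
    subst hjj
    exact (Finset.disjoint_left.mp (hGd hmn) hj) hj'
  · intro n
    rw [Finset.sum_biUnion (hpd n)]
    have : ∀ j ∈ G n, (∑ i ∈ F j,
        |∑ j' ∈ (G n).filter (fun j' => i ∈ F j'), mu n j' * lam j' i|) = |mu n j| := by
      intro j hj
      have : ∀ i ∈ F j, |∑ j' ∈ (G n).filter (fun j' => i ∈ F j'), mu n j' * lam j' i|
          = |mu n j| * |lam j i| := by
        intro i hi
        rw [hcoef hj hi, abs_mul]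
      rw [Finset.sum_congr rfl this, ← Finset.mul_sum, hFnorm j (hGsub n hj), mul_one]
    rw [Finset.sum_congr rfl this, hGnorm n]
  · intro n x
    rw [hGeq n x, Finset.sum_biUnion (hpd n)]
    refine Finset.sum_congr rfl fun j hj => ?_
    rw [hFeq j (hGsub n hj) x, Finset.mul_sum]
    refine Finset.sum_congr rfl fun i hi => ?_
    show mu n j * (lam j i * u i x)
      = (∑ j' ∈ (G n).filter (fun j' => i ∈ F j'), mu n j' * lam j' i) * u i x
    rw [hcoef hj hi, mul_assoc]

theorem GB.trans {u v c : ℕ → X → ℝ} {F : ℕ → Finset ℕ} {lam : ℕ → ℕ → ℝ}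
    {G : ℕ → Finset ℕ} {mu : ℕ → ℕ → ℝ}
    (h1 : GB u v F lam) (h2 : GB v c G mu) :
    GB u c (fun n => (G n).biUnion F)
      (fun n i => ∑ j ∈ (G n).filter (fun j => i ∈ F j), mu n j * lam j i) :=
  GB.transPartial (K := Set.univ) (fun _ _ _ _ hne => h1.1 hne)
    (fun j _ => h1.2.1 j) (fun j _ => h1.2.2 j) (fun _ _ _ => Set.mem_univ _)
    h2.1 h2.2.1 h2.2.2

theorem INBS.trans {u v c : ℕ → X → ℝ} (h1 : IsNormalizedBlockSeq u v)
    (h2 : IsNormalizedBlockSeq v c) : IsNormalizedBlockSeq u c := by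
  obtain ⟨F, lam, hg1⟩ := inbs_gb h1
  obtain ⟨G, mu, hg2⟩ := inbs_gb h2
  exact (hg1.trans hg2).toINBS

theorem GB.comp {u c : ℕ → X → ℝ} {F : ℕ → Finset ℕ} {lam : ℕ → ℕ → ℝ}
    (h : GB u c F lam) {φ : ℕ → ℕ} (hφ : Function.Injective φ) :
    GB u (fun i => c (φ i)) (fun i => F (φ i)) (fun i => lam (φ i)) :=
  ⟨fun _ _ hmn => h.1 (fun e => hmn (hφ e)), fun n => h.2.1 (φ n), fun n x => h.2.2 (φ n) x⟩

theorem GB.bound {f c : ℕ → X → ℝ} {F : ℕ → Finset ℕ} {lam : ℕ → ℕ → ℝ} {C : ℝ}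
    (h : GB f c F lam) (hb : ∀ n x, |f n x| ≤ C) : ∀ n x, |c n x| ≤ C := by
  intro n x
  rw [h.2.2 n x]
  calc |∑ i ∈ F n, lam n i * f i x| ≤ ∑ i ∈ F n, |lam n i * f i x| :=
        Finset.abs_sum_le_sum_abs _ _
    _ ≤ ∑ i ∈ F n, |lam n i| * C := by
        refine Finset.sum_le_sum fun i _ => ?_
        rw [abs_mul]
        exact mul_le_mul_of_nonneg_left (hb i x) (abs_nonneg _)
    _ = C := by rw [← Finset.sum_mul, h.2.1 n, one_mul]

theorem INBS.bound {f c : ℕ → X → ℝ} {C : ℝ} (h : IsNormalizedBlockSeq f c)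
    (hb : ∀ n x, |f n x| ≤ C) : ∀ n x, |c n x| ≤ C := by
  obtain ⟨F, lam, hg⟩ := inbs_gb h
  exact hg.bound hb

theorem GB.windowNonempty {u c : ℕ → X → ℝ} {F : ℕ → Finset ℕ} {lam : ℕ → ℕ → ℝ}
    (h : GB u c F lam) (n : ℕ) : (F n).Nonempty := by
  by_contra h0
  rw [Finset.not_nonempty_iff_eq_empty] at h0
  have := h.2.1 n
  rw [h0] at this
  simp at this


/-! ### Analysis lemmas -/

theorem le_of_forall_gt' {x y : ℝ} (h : ∀ a, y < a → x ≤ a) : x ≤ y :=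
  le_of_forall_pos_le_add fun ε hε => h (y + ε) (by linarith)

section bounds

variable {u : ℕ → ℝ} {C : ℝ}

theorem bdd_above_seq (hb : ∀ n, |u n| ≤ C) : IsBoundedUnder (· ≤ ·) atTop u :=
  isBoundedUnder_of ⟨C, fun n => (abs_le.mp (hb n)).2⟩

theorem cobdd_seq (hb : ∀ n, |u n| ≤ C) : IsCoboundedUnder (· ≤ ·) atTop u :=
  isCoboundedUnder_le_of_le atTop fun n => (abs_le.mp (hb n)).1

theorem limsup_le_of_bound (hb : ∀ n, |u n| ≤ C) : limsup u atTop ≤ C :=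
  limsup_le_of_le (cobdd_seq hb) (Eventually.of_forall fun n => (abs_le.mp (hb n)).2)

theorem neg_le_limsup_of_bound (hb : ∀ n, |u n| ≤ C) : -C ≤ limsup u atTop :=
  le_limsup_of_frequently_le
    (Frequently.of_forall fun n => (abs_le.mp (hb n)).1) (bdd_above_seq hb)

end bounds

/-- `⨆ x, limsup |h n x|`. -/
noncomputable def Dabs (h : ℕ → X → ℝ) : ℝ :=
  ⨆ x, limsup (fun n => |h n x|) atTop

section deltaFacts

variable {c : ℕ → X → ℝ} {C : ℝ}

theorem bddAbove_limsups (hb : ∀ n x, |c n x| ≤ C) :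
    BddAbove (Set.range fun x => limsup (fun n => c n x) atTop) := by
  refine ⟨C, ?_⟩
  rintro r ⟨x, rfl⟩
  exact limsup_le_of_bound fun n => hb n x

theorem bddAbove_limsups_abs (hb : ∀ n x, |c n x| ≤ C) :
    BddAbove (Set.range fun x => limsup (fun n => |c n x|) atTop) := by
  refine ⟨C, ?_⟩
  rintro r ⟨x, rfl⟩
  exact limsup_le_of_bound fun n => by rw [abs_abs]; exact hb n x

theorem limsup_le_deltaX (hb : ∀ n x, |c n x| ≤ C) (x : X) :
    limsup (fun n => c n x) atTop ≤ deltaX c :=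
  le_ciSup (bddAbove_limsups hb) x

theorem limsup_abs_le_Dabs (hb : ∀ n x, |c n x| ≤ C) (x : X) :
    limsup (fun n => |c n x|) atTop ≤ Dabs c :=
  le_ciSup (bddAbove_limsups_abs hb) x

theorem deltaX_le_bound [Nonempty X] (hb : ∀ n x, |c n x| ≤ C) : deltaX c ≤ C :=
  ciSup_le fun x => limsup_le_of_bound fun n => hb n x

theorem neg_le_deltaX [Nonempty X] (hb : ∀ n x, |c n x| ≤ C) : -C ≤ deltaX c := by
  have x0 : X := Classical.arbitrary X
  exact le_trans (neg_le_limsup_of_bound fun n => hb n x0) (limsup_le_deltaX hb x0)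

theorem deltaX_le_Dabs [Nonempty X] (hb : ∀ n x, |c n x| ≤ C) : deltaX c ≤ Dabs c := by
  refine ciSup_mono (bddAbove_limsups_abs hb) fun x => ?_
  exact limsup_le_limsup (Eventually.of_forall fun n => le_abs_self _)
    (cobdd_seq fun n => hb n x)
    (bdd_above_seq fun n => by rw [abs_abs]; exact hb n x)

theorem Dabs_le_bound [Nonempty X] (hb : ∀ n x, |c n x| ≤ C) : Dabs c ≤ C :=
  ciSup_le fun x => limsup_le_of_bound fun n => by rw [abs_abs]; exact hb n x

end deltaFacts

theorem finite_not_disjoint {W : ℕ → Finset ℕ}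
    (hd : Pairwise fun m n => Disjoint (W m) (W n)) (s : Finset ℕ) :
    {m : ℕ | ¬ Disjoint (W m) s}.Finite := by
  have hsub : {m : ℕ | ¬ Disjoint (W m) s} ⊆ ⋃ i ∈ (s : Set ℕ), {m : ℕ | i ∈ W m} := by
    intro m hm
    rw [Set.mem_setOf_eq, Finset.not_disjoint_iff] at hm
    obtain ⟨i, hiW, his⟩ := hm
    exact Set.mem_biUnion his hiW
  refine Set.Finite.subset (Set.Finite.biUnion s.finite_toSet fun i _ => ?_) hsub
  refine Set.Subsingleton.finite ?_
  intro m1 h1 m2 h2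
  by_contra hne
  exact (Finset.disjoint_left.mp (hd hne) h1) h2

theorem exists_fresh {W : ℕ → Finset ℕ}
    (hd : Pairwise fun m n => Disjoint (W m) (W n)) (s : Finset ℕ) :
    ∃ m, Disjoint (W m) s := by
  obtain ⟨m, hm⟩ := (finite_not_disjoint hd s).infinite_compl.nonempty
  rw [Set.mem_compl_iff, Set.mem_setOf_eq, not_not] at hm
  exact ⟨m, hm⟩

/-- Key windows-lemma: a (tail-)normalized block has pointwise `limsup |·|` dominated. -/
theorem limsup_abs_window_le {c w : ℕ → X → ℝ} {C : ℝ}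
    (hc : ∀ n x, |c n x| ≤ C) (hw : ∀ n x, |w n x| ≤ C)
    (F : ℕ → Finset ℕ) (lam : ℕ → ℕ → ℝ) (N : ℕ)
    (hd : ∀ ⦃m n⦄, N ≤ m → N ≤ n → m ≠ n → Disjoint (F m) (F n))
    (hnorm : ∀ n, N ≤ n → ∑ i ∈ F n, |lam n i| = 1)
    (heq : ∀ n, N ≤ n → ∀ x, w n x = ∑ i ∈ F n, lam n i * c i x)
    (x : X) :
    limsup (fun n => |w n x|) atTop ≤ limsup (fun i => |c i x|) atTop := by
  apply le_of_forall_gt'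
  intro a ha
  have hev : ∀ᶠ i in atTop, |c i x| < a :=
    eventually_lt_of_limsup_lt ha (bdd_above_seq fun n => by rw [abs_abs]; exact hc n x)
  obtain ⟨J, hJ⟩ := eventually_atTop.mp hev
  classical
  have hfin : {n : ℕ | ¬ Disjoint (if N ≤ n then F n else ∅) (Finset.range J)}.Finite := by
    refine finite_not_disjoint ?_ _
    intro m n hmn
    by_cases hm : N ≤ m <;> by_cases hn : N ≤ n <;> simp [hm, hn, hd, hmn]
  obtain ⟨M, hM⟩ := hfin.bddAbove
  have hev2 : ∀ᶠ n in atTop, |w n x| ≤ a := by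
    rw [eventually_atTop]
    refine ⟨max (M + 1) N, fun n hn => ?_⟩
    have hnN : N ≤ n := le_trans (le_max_right _ _) hn
    have hnM : M + 1 ≤ n := le_trans (le_max_left _ _) hn
    have hdisj : Disjoint (F n) (Finset.range J) := by
      by_contra hnd
      have : n ∈ {n : ℕ | ¬ Disjoint (if N ≤ n then F n else ∅) (Finset.range J)} := by
        rw [Set.mem_setOf_eq, if_pos hnN]; exact hnd
      have := hM this
      omega
    rw [heq n hnN x]
    calc |∑ i ∈ F n, lam n i * c i x| ≤ ∑ i ∈ F n, |lam n i| * |c i x| := by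
          refine le_trans (Finset.abs_sum_le_sum_abs _ _) ?_
          refine Finset.sum_le_sum fun i _ => ?_
          rw [abs_mul]
      _ ≤ ∑ i ∈ F n, |lam n i| * a := by
          refine Finset.sum_le_sum fun i hi => ?_
          have hiJ : J ≤ i := by
            have := Finset.disjoint_left.mp hdisj hi
            rw [Finset.mem_range] at this
            omega
          exact mul_le_mul_of_nonneg_left (le_of_lt (hJ i hiJ)) (abs_nonneg _)
      _ = a := by rw [← Finset.sum_mul, hnorm n hnN, one_mul]
  exact limsup_le_of_le (cobdd_seq fun n => by rw [abs_abs]; exact hw n x) hev2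

/-- The halving block: `pd v n = (v (2n) - v (2n+1))/2`. -/
noncomputable def pd (v : ℕ → X → ℝ) : ℕ → X → ℝ :=
  fun n x => (1/2 : ℝ) * v (2*n) x + (-(1/2) : ℝ) * v (2*n+1) x

theorem pd_gb (v : ℕ → X → ℝ) :
    GB v (pd v) (fun n => {2*n, 2*n+1})
      (fun n i => if i = 2*n then (1/2 : ℝ) else -(1/2)) := by
  refine ⟨?_, ?_, ?_⟩
  · intro m n hmn
    rw [Finset.disjoint_left]
    intro i hi hin
    simp only [Finset.mem_insert, Finset.mem_singleton] at hi hin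
    omega
  · intro n
    rw [Finset.sum_pair (by omega : 2*n ≠ 2*n+1)]
    dsimp only
    rw [if_pos rfl, if_neg (by omega : 2*n+1 ≠ 2*n)]
    rw [abs_neg, abs_of_pos (by norm_num : (0:ℝ) < 1/2)]
    norm_num
  · intro n x
    rw [Finset.sum_pair (by omega : 2*n ≠ 2*n+1)]
    dsimp only
    rw [if_pos rfl, if_neg (by omega : 2*n+1 ≠ 2*n)]
    rfl

theorem Dabs_pd_le [Nonempty X] {v : ℕ → X → ℝ} {C : ℝ} (hv : ∀ n x, |v n x| ≤ C) :
    Dabs (pd v) ≤ (deltaX v + Dabs v) / 2 := by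
  have hpdb : ∀ n x, |pd v n x| ≤ C := (pd_gb v).bound hv
  refine ciSup_le fun x => ?_
  apply le_of_forall_pos_le_add
  intro ε hε
  have h1 : limsup (fun n => v n x) atTop < deltaX v + ε :=
    lt_of_le_of_lt (limsup_le_deltaX hv x) (by linarith)
  have h2 : limsup (fun n => |v n x|) atTop < Dabs v + ε :=
    lt_of_le_of_lt (limsup_abs_le_Dabs hv x) (by linarith)
  have hev1 : ∀ᶠ j in atTop, v j x < deltaX v + ε :=
    eventually_lt_of_limsup_lt h1 (bdd_above_seq fun n => hv n x)
  have hev2 : ∀ᶠ j in atTop, |v j x| < Dabs v + ε :=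
    eventually_lt_of_limsup_lt h2 (bdd_above_seq fun n => by rw [abs_abs]; exact hv n x)
  obtain ⟨J, hJ⟩ := eventually_atTop.mp (hev1.and hev2)
  have hev3 : ∀ᶠ n in atTop, |pd v n x| ≤ (deltaX v + Dabs v) / 2 + ε := by
    rw [eventually_atTop]
    refine ⟨J, fun n hn => ?_⟩
    obtain ⟨ha1, hb1⟩ := hJ (2*n) (by omega)
    obtain ⟨ha2, hb2⟩ := hJ (2*n+1) (by omega)
    obtain ⟨hb1l, hb1r⟩ := abs_lt.mp hb1
    obtain ⟨hb2l, hb2r⟩ := abs_lt.mp hb2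
    rw [abs_le]
    unfold pd
    constructor <;> [skip; skip] <;> nlinarith
  exact limsup_le_of_le (cobdd_seq fun n => by rw [abs_abs]; exact hpdb n x) hev3

/-! ### epsX lemmas -/

theorem epsS_nonempty (c : ℕ → X → ℝ) :
    {r | ∃ b, IsNormalizedBlockSeq c b ∧ r = deltaX b}.Nonempty :=
  ⟨deltaX c, c, INBS.refl c, rfl⟩

theorem epsS_bddBelow [Nonempty X] {f c : ℕ → X → ℝ} {C : ℝ}
    (hbf : ∀ n x, |f n x| ≤ C) (hc : IsNormalizedBlockSeq f c) :
    BddBelow {r | ∃ b, IsNormalizedBlockSeq c b ∧ r = deltaX b} := by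
  refine ⟨-C, ?_⟩
  rintro r ⟨b, hb, rfl⟩
  exact neg_le_deltaX (INBS.bound (INBS.trans hc hb) hbf)

theorem epsX_le_deltaX [Nonempty X] {f c : ℕ → X → ℝ} {C : ℝ}
    (hbf : ∀ n x, |f n x| ≤ C) (hc : IsNormalizedBlockSeq f c) :
    epsX c ≤ deltaX c :=
  csInf_le (epsS_bddBelow hbf hc) ⟨c, INBS.refl c, rfl⟩

theorem exists_block_deltaX_lt (c : ℕ → X → ℝ) {η : ℝ} (hη : 0 < η) :
    ∃ v, IsNormalizedBlockSeq c v ∧ deltaX v < epsX c + η := by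
  have h : sInf {r | ∃ b, IsNormalizedBlockSeq c b ∧ r = deltaX b} < epsX c + η := by
    rw [← epsX]; linarith [hη]
  obtain ⟨r, ⟨v, hv, rfl⟩, hlt⟩ := exists_lt_of_csInf_lt (epsS_nonempty c) h
  exact ⟨v, hv, hlt⟩

theorem le_epsX_of_forall [Nonempty X] {c : ℕ → X → ℝ} {a : ℝ}
    (h : ∀ v, IsNormalizedBlockSeq c v → a ≤ deltaX v) : a ≤ epsX c := by
  refine le_csInf (epsS_nonempty c) ?_
  rintro r ⟨v, hv, rfl⟩
  exact h v hv

/-- One recursion step. -/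
theorem step_exists [Nonempty X] {f c : ℕ → X → ℝ} {C : ℝ}
    (hbf : ∀ n x, |f n x| ≤ C) (hc : IsNormalizedBlockSeq f c) {η : ℝ} (hη : 0 < η) :
    ∃ w, IsNormalizedBlockSeq c w ∧ Dabs w ≤ (epsX c + Dabs c) / 2 + η := by
  obtain ⟨v, hv, hvlt⟩ := exists_block_deltaX_lt c hη
  obtain ⟨Fv, lamv, hgv⟩ := inbs_gb hv
  have hbc : ∀ n x, |c n x| ≤ C := INBS.bound hc hbf
  have hbv : ∀ n x, |v n x| ≤ C := hgv.bound hbc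
  have hDv : Dabs v ≤ Dabs c := by
    refine ciSup_mono (bddAbove_limsups_abs hbc) fun x => ?_
    exact limsup_abs_window_le hbc hbv Fv lamv 0
      (fun m n _ _ h => hgv.1 h) (fun n _ => hgv.2.1 n) (fun n _ => hgv.2.2 n) x
  refine ⟨pd v, (hgv.trans (pd_gb v)).toINBS, ?_⟩
  calc Dabs (pd v) ≤ (deltaX v + Dabs v) / 2 := Dabs_pd_le hbv
    _ ≤ (epsX c + Dabs c) / 2 + η := by linarith

/-! ### Chain machinery -/

/-- Abstract recursion builder. -/
theorem exists_chain {α : Sort*} (a0 : α) (P : α → ℕ → α → Prop)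
    (h : ∀ x k, ∃ y, P x k y) :
    ∃ g : ℕ → α, g 0 = a0 ∧ ∀ k, P (g k) k (g (k+1)) := by
  choose Fn hF using h
  exact ⟨fun n => Nat.rec a0 (fun k ih => Fn ih k) n, rfl, fun k => hF _ k⟩

/-- Generic block data. -/
abbrev GBdata : Type := (ℕ → Finset ℕ) × (ℕ → ℕ → ℝ)

def reflD : GBdata := (fun n => {n}, fun _ _ => 1)

noncomputable def transD (A B : GBdata) : GBdata :=
  (fun n => (B.1 n).biUnion A.1,
   fun n i => ∑ j ∈ (B.1 n).filter (fun j => i ∈ A.1 j), B.2 n j * A.2 j i)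

noncomputable def CD (step : ℕ → GBdata) : ℕ → ℕ → GBdata
  | 0, _ => reflD
  | (n+1), k => if k = n+1 then reflD else transD (CD step n k) (step n)

theorem GB_reflD (u : ℕ → X → ℝ) : GB u u reflD.1 reflD.2 := GB.refl u

theorem GB_transD {u v c : ℕ → X → ℝ} {A B : GBdata}
    (h1 : GB u v A.1 A.2) (h2 : GB v c B.1 B.2) :
    GB u c (transD A B).1 (transD A B).2 := h1.trans h2

theorem CD_spec {d : ℕ → ℕ → X → ℝ} {step : ℕ → GBdata}
    (hstep : ∀ n, GB (d n) (d (n+1)) (step n).1 (step n).2) :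
    ∀ n k, k ≤ n → GB (d k) (d n) (CD step n k).1 (CD step n k).2 := by
  intro n
  induction n with
  | zero =>
    intro k hk
    have : k = 0 := by omega
    subst this
    exact GB_reflD _
  | succ n ih =>
    intro k hk
    by_cases h : k = n+1
    · subst h
      simp only [CD, if_pos rfl]
      exact GB_reflD _
    · have hk' : k ≤ n := by omega
      simp only [CD, if_neg h]
      exact GB_transD (ih k hk') (hstep n)

theorem CD_self (step : ℕ → GBdata) : ∀ k, CD step k k = reflD := by
  intro k
  cases k with
  | zero => rfl
  | succ k => simp [CD]

theorem CD_decomp (step : ℕ → GBdata) :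
    ∀ n k, k ≤ n → ∀ m,
      (CD step n 0).1 m = ((CD step n k).1 m).biUnion ((CD step k 0).1) := by
  intro n
  induction n with
  | zero =>
    intro k hk m
    have : k = 0 := by omega
    subst this
    simp [CD, reflD]
  | succ n ih =>
    intro k hk m
    by_cases h : k = n+1
    · subst h
      rw [CD_self]
      simp [reflD]
    · have hk' : k ≤ n := by omega
      have h0 : (0:ℕ) ≠ n+1 := by omega
      simp only [CD, if_neg h0, if_neg h, transD]
      rw [Finset.biUnion_biUnion]
      exact Finset.biUnion_congr rfl fun i _ => ih k hk' i

/-- Diagonal index selection. -/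
theorem exists_diag (W0 : ℕ → ℕ → Finset ℕ)
    (hpick : ∀ n (s : Finset ℕ), ∃ m, Disjoint (W0 n m) s) :
    ∃ ms : ℕ → ℕ, ∀ ⦃n' n⦄, n' < n → Disjoint (W0 n (ms n)) (W0 n' (ms n')) := by
  choose pick hp using hpick
  refine ⟨fun n => pick n (Nat.rec ∅ (fun n' Un => Un ∪ W0 n' (pick n' Un)) n), ?_⟩
  set U : ℕ → Finset ℕ := fun n => Nat.rec ∅ (fun n' Un => Un ∪ W0 n' (pick n' Un)) n with hU
  have hUsucc : ∀ n, U (n+1) = U n ∪ W0 n (pick n (U n)) := fun n => rfl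
  have hUmono : ∀ {a b : ℕ}, a ≤ b → U a ⊆ U b := by
    intro a b hab
    induction b with
    | zero =>
      have : a = 0 := by omega
      subst this; exact subset_rfl
    | succ b ih =>
      rcases Nat.lt_or_ge a (b+1) with hlt | hge
      · have h1 := ih (by omega)
        rw [hUsucc]
        exact h1.trans Finset.subset_union_left
      · have : a = b+1 := by omega
        subst this; exact subset_rfl
  intro n' n h
  have h1 : W0 n' (pick n' (U n')) ⊆ U n := by
    have h2 : W0 n' (pick n' (U n')) ⊆ U (n'+1) := by
      rw [hUsucc]; exact Finset.subset_union_right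
    exact h2.trans (hUmono h)
  exact Finset.disjoint_of_subset_right h1 (hp n (U n))

end HJaux


open HJaux in
/-- Hagler–Johnson diagonalization lemma. -/
theorem hagler_johnson_diagonalization {X : Type*} (f : ℕ → X → ℝ) (C : ℝ)
    (hbdd : ∀ n x, |f n x| ≤ C) :
    ∃ b : ℕ → X → ℝ, IsNormalizedBlockSeq f b ∧ deltaX b = epsX b := by
  classical
  rcases isEmpty_or_nonempty X with hX | hX
  · -- trivial case: X empty
    refine ⟨f, INBS.refl f, ?_⟩
    have hall : ∀ h : ℕ → X → ℝ, deltaX h = 0 := fun h => Real.iSup_of_isEmpty _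
    have hset : {c | ∃ b, IsNormalizedBlockSeq f b ∧ c = deltaX b} = {0} := by
      ext r
      simp only [Set.mem_setOf_eq, Set.mem_singleton_iff]
      constructor
      · rintro ⟨b, _, rfl⟩
        exact hall b
      · rintro rfl
        exact ⟨f, INBS.refl f, (hall f).symm⟩
    rw [hall f, epsX, hset, csInf_singleton]
  · -- main case
    -- Step 1: the recursive chain d
    obtain ⟨R, hR0, hRs⟩ := exists_chain (α := {c : ℕ → X → ℝ // IsNormalizedBlockSeq f c})
      ⟨f, INBS.refl f⟩
      (fun x k y => IsNormalizedBlockSeq x.1 y.1 ∧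
        Dabs y.1 ≤ (epsX x.1 + Dabs x.1) / 2 + (1/2)^k)
      (by
        intro x k
        obtain ⟨w, hw1, hw2⟩ := step_exists hbdd x.2
          (show (0:ℝ) < (1/2)^k by positivity)
        exact ⟨⟨w, INBS.trans x.2 hw1⟩, hw1, hw2⟩)
    set d : ℕ → ℕ → X → ℝ := fun k => (R k).1 with hd
    have hd0 : d 0 = f := by show (R 0).1 = f; rw [hR0]
    have hdf : ∀ k, IsNormalizedBlockSeq f (d k) := fun k => (R k).2
    have hdstep : ∀ k, IsNormalizedBlockSeq (d k) (d (k+1)) := fun k => (hRs k).1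
    have hdbound : ∀ k, Dabs (d (k+1)) ≤ (epsX (d k) + Dabs (d k)) / 2 + (1/2)^k :=
      fun k => (hRs k).2
    have hbd : ∀ k n x, |d k n x| ≤ C := fun k => INBS.bound (hdf k) hbdd
    -- Step 2: block data along the chain
    choose sF sLam hsd hsn hse using hdstep
    set step : ℕ → GBdata := fun k => (sF k, fun _ i => sLam k i) with hstepdef
    have hstepGB : ∀ k, GB (d k) (d (k+1)) (step k).1 (step k).2 :=
      fun k => ⟨hsd k, hsn k, fun n x => by rw [hse k n]⟩
    have hCD := CD_spec hstepGB
    -- Step 3: diagonal index selection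
    obtain ⟨ms, hms⟩ := exists_diag (fun n m => (CD step (n+1) 0).1 m)
      (fun n s => exists_fresh (hCD (n+1) 0 (Nat.zero_le _)).1 s)
    have hmspair : Pairwise fun n n' =>
        Disjoint ((CD step (n+1) 0).1 (ms n)) ((CD step (n'+1) 0).1 (ms n')) := by
      intro n n' hne
      rcases lt_or_gt_of_ne hne with h | h
      · exact (hms h).symm
      · exact hms h
    set g : ℕ → X → ℝ := fun n => d (n+1) (ms n) with hgdef
    -- g is a normalized block of f
    have hgGB : GB f g (fun n => (CD step (n+1) 0).1 (ms n))
        (fun n i => (CD step (n+1) 0).2 (ms n) i) := by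
      refine ⟨hmspair, fun n => (hCD (n+1) 0 (Nat.zero_le _)).2.1 (ms n), fun n x => ?_⟩
      have h := (hCD (n+1) 0 (Nat.zero_le _)).2.2 (ms n) x
      rw [hd0] at h
      exact h
    have hgINBS : IsNormalizedBlockSeq f g := hgGB.toINBS
    have hgb : ∀ n x, |g n x| ≤ C := INBS.bound hgINBS hbdd
    -- window nonemptiness and disjointness at all levels
    have hWne : ∀ k m, ((CD step k 0).1 m).Nonempty :=
      fun k m => GB.windowNonempty (hCD k 0 (Nat.zero_le _)) m
    have hWkdisj : ∀ (k : ℕ) ⦃n n' : ℕ⦄, k ≤ n+1 → k ≤ n'+1 → n ≠ n' →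
        Disjoint ((CD step (n+1) k).1 (ms n)) ((CD step (n'+1) k).1 (ms n')) := by
      intro k n n' h1 h2 hne
      rw [Finset.disjoint_left]
      intro j hj hj'
      obtain ⟨i, hi⟩ := hWne k j
      have hi1 : i ∈ (CD step (n+1) 0).1 (ms n) := by
        rw [CD_decomp step (n+1) k h1 (ms n)]
        exact Finset.mem_biUnion.mpr ⟨j, hj, hi⟩
      have hi2 : i ∈ (CD step (n'+1) 0).1 (ms n') := by
        rw [CD_decomp step (n'+1) k h2 (ms n')]
        exact Finset.mem_biUnion.mpr ⟨j, hj', hi⟩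
      exact (Finset.disjoint_left.mp (hmspair hne) hi1) hi2
    -- Step 4: deltaX g ≤ Dabs (d k) for all k
    have hδg : ∀ k, deltaX g ≤ Dabs (d k) := by
      intro k
      refine ciSup_le fun x => ?_
      have h1 : limsup (fun n => g n x) atTop ≤ limsup (fun n => |g n x|) atTop :=
        limsup_le_limsup (Eventually.of_forall fun n => le_abs_self _)
          (cobdd_seq fun n => hgb n x)
          (bdd_above_seq fun n => by rw [abs_abs]; exact hgb n x)
      have h2 : limsup (fun n => |g n x|) atTop ≤ limsup (fun i => |d k i x|) atTop := by
        refine limsup_abs_window_le (hbd k) hgb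
          (fun n => (CD step (n+1) k).1 (ms n))
          (fun n i => (CD step (n+1) k).2 (ms n) i) k ?_ ?_ ?_ x
        · intro m n hm hn hmn
          exact hWkdisj k (by omega) (by omega) hmn
        · intro n hn
          exact (hCD (n+1) k (by omega)).2.1 (ms n)
        · intro n hn x'
          exact (hCD (n+1) k (by omega)).2.2 (ms n) x'
      exact le_trans h1 (le_trans h2 (limsup_abs_le_Dabs (hbd k) x))
    -- Step 5: epsX (d k) ≤ epsX g for all k
    have hεg : ∀ k, epsX (d k) ≤ epsX g := by
      intro k
      refine le_epsX_of_forall fun e he => ?_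
      have he' := he
      obtain ⟨H, ν, hH1, hH2, hH3⟩ := he
      have heb : ∀ n x, |e n x| ≤ C := INBS.bound (INBS.trans hgINBS he') hbdd
      have hinf : {n : ℕ | Disjoint (H n) (Finset.range k)}.Infinite := by
        have h2 := (finite_not_disjoint hH1 (Finset.range k)).infinite_compl
        simp only [Set.compl_setOf, not_not] at h2
        exact h2
      set φ : ℕ → ℕ := fun i => ((Set.Infinite.natEmbedding _ hinf) i : ℕ) with hφdef
      have hφinj : Function.Injective φ :=
        fun a b hab => (Set.Infinite.natEmbedding _ hinf).injective (Subtype.ext hab)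
      have hφmem : ∀ i, Disjoint (H (φ i)) (Finset.range k) :=
        fun i => ((Set.Infinite.natEmbedding _ hinf) i).2
      have hge : GB g e H (fun _ => ν) := ⟨hH1, hH2, fun n x => by rw [hH3 n]⟩
      have hgφ := hge.comp hφinj
      have hKGB : GB (d k) (fun i => e (φ i))
          (fun i => (H (φ i)).biUnion (fun j => (CD step (j+1) k).1 (ms j)))
          (fun i i' => ∑ j ∈ (H (φ i)).filter
              (fun j => i' ∈ (CD step (j+1) k).1 (ms j)),
            ν j * (CD step (j+1) k).2 (ms j) i') := by
        refine GB.transPartial (K := {n : ℕ | k ≤ n})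
          (F := fun j => (CD step (j+1) k).1 (ms j))
          (lam := fun j i => (CD step (j+1) k).2 (ms j) i)
          ?_ ?_ ?_ ?_ hgφ.1 hgφ.2.1 hgφ.2.2
        · intro j j' hj hj' hne
          exact hWkdisj k (by simp only [Set.mem_setOf_eq] at hj; omega)
            (by simp only [Set.mem_setOf_eq] at hj'; omega) hne
        · intro j hj
          simp only [Set.mem_setOf_eq] at hj
          exact (hCD (j+1) k (by omega)).2.1 (ms j)
        · intro j hj x
          simp only [Set.mem_setOf_eq] at hj
          exact (hCD (j+1) k (by omega)).2.2 (ms j) x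
        · intro i n hn
          have h3 := Finset.disjoint_left.mp (hφmem i) hn
          rw [Finset.mem_range] at h3
          simp only [Set.mem_setOf_eq]
          omega
      have heINBS : IsNormalizedBlockSeq (d k) (fun i => e (φ i)) := hKGB.toINBS
      have h1 : epsX (d k) ≤ deltaX (fun i => e (φ i)) :=
        csInf_le (epsS_bddBelow hbdd (hdf k)) ⟨_, heINBS, rfl⟩
      have h2 : deltaX (fun i => e (φ i)) ≤ deltaX e := by
        refine ciSup_mono (bddAbove_limsups heb) fun x => ?_
        have htend : Tendsto φ atTop atTop := by
          rw [← Nat.cofinite_eq_atTop]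
          exact hφinj.tendsto_cofinite
        apply le_of_forall_gt'
        intro a ha
        have hev : ∀ᶠ n in atTop, e n x < a :=
          eventually_lt_of_limsup_lt ha (bdd_above_seq fun n => heb n x)
        have hev2 := htend.eventually hev
        exact limsup_le_of_le (cobdd_seq fun i => heb (φ i) x)
          (hev2.mono fun i h => h.le)
      exact h1.trans h2
    -- Step 6: putting things together
    have hepsle : ∀ k, epsX (d k) ≤ C := fun k =>
      le_trans (epsX_le_deltaX hbdd (hdf k)) (deltaX_le_bound (hbd k))
    have hEbdd : BddAbove (Set.range fun k => epsX (d k)) := by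
      refine ⟨C, ?_⟩
      rintro r ⟨k, rfl⟩
      exact hepsle k
    set E := ⨆ k, epsX (d k) with hEdef
    have hkE : ∀ k, epsX (d k) ≤ E := fun k => le_ciSup hEbdd k
    have hEg : E ≤ epsX g := ciSup_le hεg
    have hrec : ∀ k, Dabs (d (k+1)) - E ≤ (Dabs (d k) - E) / 2 + (1/2)^k := by
      intro k
      have h1 := hdbound k
      have h2 := hkE k
      linarith
    have hgE : deltaX g ≤ E := by
      refine le_of_forall_pos_le_add fun η hη => ?_
      obtain ⟨K1, hK1⟩ := exists_pow_lt_of_lt_one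
        (show (0:ℝ) < η/4 by linarith) (show (1:ℝ)/2 < 1 by norm_num)
      have hiter : ∀ j, Dabs (d (K1 + j)) - E ≤ (Dabs (d K1) - E) * (1/2)^j + η/2 := by
        intro j
        induction j with
        | zero => simp; linarith
        | succ j ih =>
          have h1 := hrec (K1 + j)
          have h2 : ((1:ℝ)/2)^(K1 + j) ≤ (η/4) * (1/2)^j := by
            rw [pow_add]
            exact mul_le_mul_of_nonneg_right (le_of_lt hK1) (by positivity)
          have h3 : ((1:ℝ)/2)^j ≤ 1 := pow_le_one₀ (by norm_num) (by norm_num)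
          have h4 : (η/4) * ((1:ℝ)/2)^j ≤ η/4 := by nlinarith
          have h5 : K1 + (j+1) = (K1 + j) + 1 := rfl
          rw [h5]
          calc Dabs (d ((K1 + j) + 1)) - E
              ≤ (Dabs (d (K1 + j)) - E) / 2 + (1/2)^(K1 + j) := h1
            _ ≤ ((Dabs (d K1) - E) * (1/2)^j + η/2) / 2 + (η/4) * (1/2)^j := by linarith
            _ = (Dabs (d K1) - E) * (1/2)^(j+1) + (η/4 + (η/4) * (1/2)^j) := by ring
            _ ≤ (Dabs (d K1) - E) * (1/2)^(j+1) + η/2 := by linarith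
      have hjex : ∃ j, (Dabs (d K1) - E) * (1/2:ℝ)^j ≤ η/2 := by
        rcases le_or_gt (Dabs (d K1) - E) 0 with h | h
        · refine ⟨0, ?_⟩
          simp only [pow_zero, mul_one]
          linarith
        · obtain ⟨j, hj⟩ := exists_pow_lt_of_lt_one
            (show (0:ℝ) < η/(2*(Dabs (d K1) - E)) by positivity)
            (show (1:ℝ)/2 < 1 by norm_num)
          refine ⟨j, ?_⟩
          have h6 : (Dabs (d K1) - E) * ((1:ℝ)/2)^j
              < (Dabs (d K1) - E) * (η/(2*(Dabs (d K1) - E))) :=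
            mul_lt_mul_of_pos_left hj h
          have h7 : (Dabs (d K1) - E) * (η/(2*(Dabs (d K1) - E))) = η/2 := by
            field_simp
          linarith
      obtain ⟨j, hj⟩ := hjex
      have h8 := hiter j
      have h9 := hδg (K1 + j)
      linarith
    exact ⟨g, hgINBS, le_antisymm (hgE.trans hEg) (epsX_le_deltaX hbdd hgINBS)⟩
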